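/- Let $1<p<2$ and let $\mathfrak{S}f(x)=\big(\sum_k\sup_{|y|\le 100d\cdot 2^{-k}}|\mathcal{L}_kf(x+y)|^2\big)^{1/2}$ be the Peetre maximal square function, where $\mathcal{L}_kf=\phi_k*f$, $\phi_k=2^{kd}\phi(2^k\cdot)$, and $\phi$ is a radial Schwartz function with $\widehat\phi$ supported in $\{1/5<|\xi|<5\}$. For $n\in\mathbb{Z}$ let $\Omega_n=\{x:\mathfrak{S}f(x)>2^n\}$, let $\mathcal{Q}_{-k}^n$ be the dyadic cubes $Q$ of sidelength $2^{-k}$ with $|Q\cap\Omega_n|\ge|Q|/2$ and $|Q\cap\Omega_{n+1}|<|Q|/2$, and for a Whitney cube $W$ of $\Omega_n^*$ set $a_{k,W,n}=\sum_{Q\in\mathcal{Q}_{-k}^n,\,Q\subset W}(\mathcal{L}_kf)\chi_Q$. Then $\sum_{W}\sum_k\|a_{k,W,n}\|_{L^2}^2\le 8\cdot 2^{2n}\,\mathrm{meas}(\Omega_n)$. -/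

import Mathlib

open MeasureTheory ENNReal
open scoped FourierTransform

open scoped Classical
noncomputable section

/-- `L_k f = φ_k * f` where `φ_k = 2^{kd} φ(2^k ·)`. -/
def Lk (d : ℕ) (φ f : EuclideanSpace ℝ (Fin d) → ℂ) (k : ℤ)
    (x : EuclideanSpace ℝ (Fin d)) : ℂ :=
  ∫ y, (((2 : ℝ) ^ (k * (d : ℤ)) : ℝ) : ℂ) * φ ((2 : ℝ) ^ k • (x - y)) * f y

/-- The Peetre-type maximal square function
`𝔖f(x) = (Σ_k sup_{|y| ≤ 100d·2^{-k}} |L_k f(x+y)|²)^{1/2}`. -/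
def peetreSq (d : ℕ) (φ f : EuclideanSpace ℝ (Fin d) → ℂ)
    (x : EuclideanSpace ℝ (Fin d)) : ℝ≥0∞ :=
  (∑' k : ℤ, ⨆ y ∈ Metric.closedBall (0 : EuclideanSpace ℝ (Fin d))
      (100 * d * (2 : ℝ) ^ (-k)), (‖Lk d φ f k (x + y)‖₊ : ℝ≥0∞) ^ 2) ^ (1 / 2 : ℝ)

/-- `Ω_n = {x : 𝔖f(x) > 2^n}`. -/
def OmegaSet (d : ℕ) (φ f : EuclideanSpace ℝ (Fin d) → ℂ) (n : ℤ) :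
    Set (EuclideanSpace ℝ (Fin d)) :=
  {x | (2 : ℝ≥0∞) ^ n < peetreSq d φ f x}

/-- The dyadic cube of sidelength `2^s` indexed by `m ∈ ℤ^d`. -/
def dyadicCube (d : ℕ) (s : ℤ) (m : Fin d → ℤ) : Set (EuclideanSpace ℝ (Fin d)) :=
  {x | ∀ i, (2 : ℝ) ^ s * m i ≤ x i ∧ x i < (2 : ℝ) ^ s * (m i + 1)}

/-- The 50-fold dilate (same center) of the dyadic cube `(s, m)`. -/
def dilate50 (d : ℕ) (s : ℤ) (m : Fin d → ℤ) : Set (EuclideanSpace ℝ (Fin d)) :=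
  {x | ∀ i, |x i - (2 : ℝ) ^ s * (m i + 1 / 2)| ≤ 25 * (2 : ℝ) ^ s}

/-- Membership of the dyadic cube of sidelength `2^{-k}` indexed by `m` in the
collection `𝒬_{-k}^n`: `|Q ∩ Ω_n| ≥ |Q|/2` and `|Q ∩ Ω_{n+1}| < |Q|/2`. -/
def memQcal (d : ℕ) (φ f : EuclideanSpace ℝ (Fin d) → ℂ) (n k : ℤ)
    (m : Fin d → ℤ) : Prop :=
  volume (dyadicCube d (-k) m) / 2 ≤ volume (dyadicCube d (-k) m ∩ OmegaSet d φ f n) ∧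
  volume (dyadicCube d (-k) m ∩ OmegaSet d φ f (n + 1)) < volume (dyadicCube d (-k) m) / 2

/-- `Ω_n^* = {x : Mχ_{Ω_n}(x) > 100^{-d}}`, with `M` the Hardy–Littlewood maximal
operator. -/
def OmegaStar (d : ℕ) (φ f : EuclideanSpace ℝ (Fin d) → ℂ) (n : ℤ) :
    Set (EuclideanSpace ℝ (Fin d)) :=
  {x | (100 : ℝ≥0∞) ^ (-(d : ℤ)) <
    ⨆ (r : ℝ) (_ : 0 < r),
      volume (OmegaSet d φ f n ∩ Metric.ball x r) / volume (Metric.ball x r)}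

/-- The Whitney cubes of `Ω_n^*`: dyadic cubes maximal with the property that their
50-fold dilate is contained in `Ω_n^*`. -/
def whitney (d : ℕ) (φ f : EuclideanSpace ℝ (Fin d) → ℂ) (n : ℤ) (s : ℤ)
    (m : Fin d → ℤ) : Prop :=
  dilate50 d s m ⊆ OmegaStar d φ f n ∧
  ∀ (s' : ℤ) (m' : Fin d → ℤ), dyadicCube d s m ⊂ dyadicCube d s' m' →
    ¬ dilate50 d s' m' ⊆ OmegaStar d φ f n

/-- The atom `a_{k,W,n} = Σ_{Q ∈ 𝒬_{-k}^n, Q ⊂ W} (L_k f)·χ_Q`, for `W` the dyadic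
cube `(s, m)`. -/
def atomA (d : ℕ) (φ f : EuclideanSpace ℝ (Fin d) → ℂ) (n k s : ℤ)
    (m : Fin d → ℤ) : EuclideanSpace ℝ (Fin d) → ℂ :=
  Set.indicator
    {x | ∃ m' : Fin d → ℤ, memQcal d φ f n k m' ∧
      dyadicCube d (-k) m' ⊆ dyadicCube d s m ∧ x ∈ dyadicCube d (-k) m'}
    (Lk d φ f k)

namespace Aux15
open Set Metric

section Cube
variable {d : ℕ}

lemma two_zpow_pos (s : ℤ) : (0:ℝ) < (2:ℝ)^s := by positivity

lemma cube_eq_preimage (s : ℤ) (m : Fin d → ℤ) :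
    dyadicCube d s m = (MeasurableEquiv.toLp 2 (Fin d → ℝ)).symm ⁻¹'
      (Set.univ.pi fun i => Set.Ico ((2:ℝ)^s * m i) ((2:ℝ)^s * (m i + 1))) := by
  ext x
  simp [dyadicCube, Set.mem_pi, MeasurableEquiv.coe_toLp_symm, Set.mem_Ico]

lemma measurableSet_cube (s : ℤ) (m : Fin d → ℤ) : MeasurableSet (dyadicCube d s m) := by
  rw [cube_eq_preimage]
  exact (MeasurableEquiv.toLp 2 (Fin d → ℝ)).symm.measurable
    (MeasurableSet.univ_pi fun i => measurableSet_Ico)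

lemma volume_cube (s : ℤ) (m : Fin d → ℤ) :
    volume (dyadicCube d s m) = (ENNReal.ofReal ((2:ℝ)^s))^d := by
  rw [cube_eq_preimage,
    (EuclideanSpace.volume_preserving_symm_measurableEquiv_toLp (Fin d)).measure_preimage
      (MeasurableSet.univ_pi fun i => measurableSet_Ico).nullMeasurableSet,
    volume_pi_pi]
  have : ∀ i : Fin d, volume (Set.Ico ((2:ℝ)^s * m i) ((2:ℝ)^s * (m i + 1)))
      = ENNReal.ofReal ((2:ℝ)^s) := by
    intro i
    rw [Real.volume_Ico]
    congr 1
    ring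
  simp [this]

lemma volume_cube_pos (s : ℤ) (m : Fin d → ℤ) : 0 < volume (dyadicCube d s m) := by
  rw [volume_cube]
  exact ENNReal.pow_pos (ENNReal.ofReal_pos.2 (two_zpow_pos s)) d

lemma volume_cube_lt_top (s : ℤ) (m : Fin d → ℤ) : volume (dyadicCube d s m) < ⊤ := by
  rw [volume_cube]
  exact ENNReal.pow_lt_top ENNReal.ofReal_lt_top

lemma Ico_dyadic_subset {s s' : ℤ} (hss : s ≤ s') {a b : ℤ} {t : ℝ}
    (h1a : (2:ℝ)^s * a ≤ t) (h1b : t < (2:ℝ)^s * (a+1))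
    (h2a : (2:ℝ)^s' * b ≤ t) (h2b : t < (2:ℝ)^s' * (b+1)) :
    (2:ℝ)^s' * b ≤ (2:ℝ)^s * a ∧ (2:ℝ)^s * (a+1) ≤ (2:ℝ)^s' * (b+1) := by
  set N : ℕ := (s' - s).toNat with hNdef
  have hsp : (0:ℝ) < (2:ℝ)^s := two_zpow_pos s
  have hN : (2:ℝ)^s' = (2:ℝ)^s * ((2^N : ℤ) : ℝ) := by
    push_cast
    rw [← zpow_natCast (2:ℝ) N, hNdef, Int.toNat_of_nonneg (sub_nonneg.2 hss),
      ← zpow_add₀ (by norm_num : (2:ℝ) ≠ 0)]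
    ring_nf
  set c : ℤ := b * 2^N with hcdef
  have e1 : (2:ℝ)^s' * b = (2:ℝ)^s * (c:ℝ) := by rw [hN, hcdef]; push_cast; ring
  have e2 : (2:ℝ)^s' * (b+1) = (2:ℝ)^s * ((c:ℝ) + (2^N:ℤ)) := by
    rw [hN, hcdef]; push_cast; ring
  have hca : c ≤ a := by
    have h : (c:ℝ) < (a:ℝ) + 1 := by
      rw [e1] at h2a
      have h' := h2a.trans_lt h1b
      have h'' := (mul_lt_mul_iff_right₀ hsp).1 h'
      push_cast at h'' ⊢
      linarith
    have h' : c < a + 1 := by exact_mod_cast h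
    omega
  have hac : a + 1 ≤ c + 2^N := by
    have h : (a:ℝ) < (c:ℝ) + (2^N:ℤ) := by
      rw [e2] at h2b
      have h' := h1a.trans_lt h2b
      have h'' := (mul_lt_mul_iff_right₀ hsp).1 h'
      linarith
    have h' : a < c + 2^N := by exact_mod_cast h
    omega
  constructor
  · rw [e1]
    have h : (c:ℝ) ≤ a := by exact_mod_cast hca
    nlinarith
  · rw [e2]
    have h : (a:ℝ) + 1 ≤ (c:ℝ) + (2^N:ℤ) := by exact_mod_cast hac
    nlinarith

lemma cube_subset_cube {s s' : ℤ} {m m' : Fin d → ℤ} (hss : s ≤ s')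
    {x : EuclideanSpace ℝ (Fin d)} (hx : x ∈ dyadicCube d s m)
    (hx' : x ∈ dyadicCube d s' m') :
    dyadicCube d s m ⊆ dyadicCube d s' m' := by
  intro u hu i
  obtain ⟨h1, h2⟩ := Ico_dyadic_subset hss (hx i).1 (hx i).2 (hx' i).1 (hx' i).2
  exact ⟨h1.trans (hu i).1, (hu i).2.trans_le h2⟩

/-- the corner of a cube -/
def corner (s : ℤ) (m : Fin d → ℤ) : EuclideanSpace ℝ (Fin d) :=
  (WithLp.equiv 2 (Fin d → ℝ)).symm fun i => (2:ℝ)^s * m i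

lemma corner_mem (s : ℤ) (m : Fin d → ℤ) : corner s m ∈ dyadicCube d s m := by
  intro i
  have h : corner s m i = (2:ℝ)^s * m i := rfl
  rw [h]
  refine ⟨le_refl _, ?_⟩
  have := two_zpow_pos s
  nlinarith

lemma level_le_of_subset (hd : 1 ≤ d) {s s' : ℤ} {m m' : Fin d → ℤ}
    (h : dyadicCube d s m ⊆ dyadicCube d s' m') : s ≤ s' := by
  have hv := measure_mono (μ := volume) h
  rw [volume_cube, volume_cube] at hv
  have h2s := (two_zpow_pos s).le
  have h2s' := (two_zpow_pos s').le
  rw [← ENNReal.ofReal_pow h2s, ← ENNReal.ofReal_pow h2s',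
    ENNReal.ofReal_le_ofReal_iff (by positivity)] at hv
  have h' : (2:ℝ)^s ≤ (2:ℝ)^s' :=
    (pow_le_pow_iff_left₀ h2s h2s' (by omega)).1 hv
  exact (zpow_le_zpow_iff_right₀ (by norm_num : (1:ℝ) < 2)).1 h'

lemma cube_injective (hd : 1 ≤ d) {s s' : ℤ} {m m' : Fin d → ℤ}
    (h : dyadicCube d s m = dyadicCube d s' m') : s = s' ∧ m = m' := by
  have hs : s = s' :=
    le_antisymm (level_le_of_subset hd h.le) (level_le_of_subset hd h.ge)
  subst hs
  refine ⟨rfl, funext fun i => ?_⟩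
  have hc := corner_mem s m
  rw [h] at hc
  have hci := hc i
  have hcv : corner s m i = (2:ℝ)^s * m i := rfl
  rw [hcv] at hci
  have hsp := two_zpow_pos s
  obtain ⟨h1, h2⟩ := hci
  have h1' : (m' i : ℝ) ≤ m i := le_of_mul_le_mul_left h1 hsp
  have h2' : (m i : ℝ) < m' i + 1 := lt_of_mul_lt_mul_left h2 hsp.le
  have h1'' : m' i ≤ m i := by exact_mod_cast h1'
  have h2'' : (m i : ℤ) < m' i + 1 := by exact_mod_cast h2'
  omega

lemma norm_sub_le_of_mem_cube {s : ℤ} {m : Fin d → ℤ}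
    {x z : EuclideanSpace ℝ (Fin d)} (hx : x ∈ dyadicCube d s m)
    (hz : z ∈ dyadicCube d s m) :
    ‖x - z‖ ≤ Real.sqrt d * (2:ℝ)^s := by
  rw [EuclideanSpace.norm_eq]
  have hb : ∀ i, ‖(x - z) i‖^2 ≤ ((2:ℝ)^s)^2 := by
    intro i
    have hxi := hx i
    have hzi := hz i
    have hsub : (x - z) i = x i - z i := rfl
    rw [hsub, Real.norm_eq_abs, sq_abs]
    have h2 : (2:ℝ)^s * (m i + 1) = (2:ℝ)^s * m i + 2^s := by ring
    rw [h2] at hxi hzi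
    nlinarith [hxi.1, hxi.2, hzi.1, hzi.2]
  have hsum : (∑ i, ‖(x - z) i‖^2) ≤ (d : ℝ) * ((2:ℝ)^s)^2 := by
    calc (∑ i, ‖(x - z) i‖^2) ≤ ∑ _i : Fin d, ((2:ℝ)^s)^2 :=
          Finset.sum_le_sum fun i _ => hb i
      _ = (d : ℝ) * ((2:ℝ)^s)^2 := by simp [mul_comm]
  calc Real.sqrt (∑ i, ‖(x - z) i‖^2) ≤ Real.sqrt ((d:ℝ) * ((2:ℝ)^s)^2) :=
        Real.sqrt_le_sqrt hsum
    _ = Real.sqrt d * (2:ℝ)^s := by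
        rw [Real.sqrt_mul (by positivity), Real.sqrt_sq (two_zpow_pos s).le]

lemma sqrt_d_mul_le (hd : 1 ≤ d) (s : ℤ) :
    Real.sqrt d * (2:ℝ)^s ≤ 100 * d * (2:ℝ)^s := by
  have h1 : (1:ℝ) ≤ d := by exact_mod_cast hd
  have h : Real.sqrt d ≤ d := by
    nlinarith [Real.sq_sqrt (show (0:ℝ) ≤ d by positivity),
      Real.sqrt_nonneg (d:ℝ)]
  have h' := h.trans (by linarith : (d:ℝ) ≤ 100 * d)
  exact mul_le_mul_of_nonneg_right h' (two_zpow_pos s).le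

end Cube
end Aux15
namespace Aux15
open Set Metric

section Main
variable {d : ℕ} {φ f : EuclideanSpace ℝ (Fin d) → ℂ} {n : ℤ}

lemma measurable_Lk (hφ : Continuous φ) (hf : Measurable f) (k : ℤ) :
    Measurable (Lk d φ f k) := by
  have hsm : MeasureTheory.StronglyMeasurable (Function.uncurry fun x y =>
      (((2 : ℝ) ^ (k * (d : ℤ)) : ℝ) : ℂ) * φ ((2 : ℝ) ^ k • (x - y)) * f y) := by
    apply Measurable.stronglyMeasurable
    have h1 : Measurable (fun p : EuclideanSpace ℝ (Fin d) × EuclideanSpace ℝ (Fin d) =>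
        (2 : ℝ) ^ k • (p.1 - p.2)) :=
      Continuous.measurable (by fun_prop)
    exact (measurable_const.mul (hφ.measurable.comp h1)).mul (hf.comp measurable_snd)
  exact hsm.integral_prod_right'.measurable

/-- The summand of the Peetre square function. -/
def Sk (d : ℕ) (φ f : EuclideanSpace ℝ (Fin d) → ℂ) (k : ℤ)
    (z : EuclideanSpace ℝ (Fin d)) : ℝ≥0∞ :=
  ⨆ y ∈ Metric.closedBall (0 : EuclideanSpace ℝ (Fin d))
      (100 * d * (2 : ℝ) ^ (-k)), (‖Lk d φ f k (z + y)‖₊ : ℝ≥0∞) ^ 2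

lemma peetre_eq (z : EuclideanSpace ℝ (Fin d)) :
    peetreSq d φ f z = (∑' k : ℤ, Sk d φ f k z) ^ (1/2 : ℝ) := rfl

lemma point_le_Sk {k : ℤ} {x z : EuclideanSpace ℝ (Fin d)}
    (h : ‖x - z‖ ≤ 100 * d * (2:ℝ)^(-k)) :
    (‖Lk d φ f k x‖₊ : ℝ≥0∞) ^ 2 ≤ Sk d φ f k z := by
  have hmem : x - z ∈ Metric.closedBall (0 : EuclideanSpace ℝ (Fin d))
      (100 * d * (2:ℝ)^(-k)) := by
    simpa [mem_closedBall_zero_iff] using h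
  have hle := le_biSup (f := fun y => (‖Lk d φ f k (z + y)‖₊ : ℝ≥0∞) ^ 2) hmem
  rw [Sk]
  simpa using hle

lemma tsum_Sk_le {z : EuclideanSpace ℝ (Fin d)} (hz : z ∉ OmegaSet d φ f (n+1)) :
    ∑' k : ℤ, Sk d φ f k z ≤ ((2:ℝ≥0∞)^(n+1)) ^ (2:ℕ) := by
  have hz' : peetreSq d φ f z ≤ (2:ℝ≥0∞)^(n+1) := not_lt.1 hz
  have h2 := pow_le_pow_left₀ zero_le hz' 2
  calc (∑' k : ℤ, Sk d φ f k z)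
      = ((∑' k : ℤ, Sk d φ f k z) ^ (1/2:ℝ)) ^ (2:ℕ) := by
        rw [← ENNReal.rpow_natCast ((∑' k : ℤ, Sk d φ f k z) ^ (1/2:ℝ)) 2,
          ← ENNReal.rpow_mul]
        norm_num
    _ = (peetreSq d φ f z) ^ (2:ℕ) := by rw [peetre_eq]
    _ ≤ ((2:ℝ≥0∞)^(n+1)) ^ (2:ℕ) := h2

lemma Omega_mono : OmegaSet d φ f (n+1) ⊆ OmegaSet d φ f n := by
  intro x hx
  have h : (2:ℝ≥0∞)^n ≤ (2:ℝ≥0∞)^(n+1) := by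
    rw [ENNReal.zpow_add (by norm_num) (by norm_num) n 1]
    simpa using le_mul_of_one_le_right zero_le (by norm_num : (1:ℝ≥0∞) ≤ 2^(1:ℤ))
  exact lt_of_le_of_lt h hx

/-- union of the cubes of `𝒬_{-k}^n` -/
def Vset (d : ℕ) (φ f : EuclideanSpace ℝ (Fin d) → ℂ) (n k : ℤ) :
    Set (EuclideanSpace ℝ (Fin d)) :=
  ⋃ (m' : Fin d → ℤ) (_ : memQcal d φ f n k m'), dyadicCube d (-k) m'

def Vall (d : ℕ) (φ f : EuclideanSpace ℝ (Fin d) → ℂ) (n : ℤ) :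
    Set (EuclideanSpace ℝ (Fin d)) :=
  ⋃ k : ℤ, Vset d φ f n k

lemma measurableSet_Vset (k : ℤ) : MeasurableSet (Vset d φ f n k) :=
  MeasurableSet.iUnion fun m' => MeasurableSet.iUnion fun _ => measurableSet_cube _ _

lemma measurableSet_Vall : MeasurableSet (Vall d φ f n) :=
  MeasurableSet.iUnion fun _ => measurableSet_Vset _

end Main
end Aux15
namespace Aux15
open Set Metric

section Density
variable {d : ℕ} {φ f : EuclideanSpace ℝ (Fin d) → ℂ} {n : ℤ}

lemma exists_not_in_Omega {k : ℤ} {m' : Fin d → ℤ} (hm : memQcal d φ f n k m') :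
    ∃ z ∈ dyadicCube d (-k) m', z ∉ OmegaSet d φ f (n+1) := by
  by_contra hcon
  push_neg at hcon
  have hsub : dyadicCube d (-k) m' ∩ OmegaSet d φ f (n+1) = dyadicCube d (-k) m' :=
    Set.inter_eq_left.2 hcon
  have h2 := hm.2
  rw [hsub] at h2
  exact absurd (h2.trans_le (ENNReal.half_le_self)) (lt_irrefl _)

/-- the normalized density constant -/
def delta (d : ℕ) : ℝ≥0∞ :=
  (2 * ENNReal.ofReal ((Real.sqrt d)^d) *
    volume (Metric.ball (0 : EuclideanSpace ℝ (Fin d)) 1))⁻¹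

lemma delta_ne_zero (hd : 1 ≤ d) : delta d ≠ 0 := by
  rw [delta, ENNReal.inv_ne_zero]
  exact ENNReal.mul_ne_top (ENNReal.mul_ne_top (by norm_num) ENNReal.ofReal_ne_top)
    measure_ball_lt_top.ne

lemma ratio_le (hd : 1 ≤ d) {k : ℤ} {m' : Fin d → ℤ} (hm : memQcal d φ f n k m')
    {x : EuclideanSpace ℝ (Fin d)} (hx : x ∈ dyadicCube d (-k) m') :
    volume (toMeasurable volume (OmegaSet d φ f (n+1)) ∩
        Metric.closedBall x (Real.sqrt d * (2:ℝ)^(-k:ℤ))) /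
      volume (Metric.closedBall x (Real.sqrt d * (2:ℝ)^(-k:ℤ))) ≤ 1 - delta d := by
  set A := toMeasurable volume (OmegaSet d φ f (n+1)) with hA
  set r := Real.sqrt d * (2:ℝ)^(-k:ℤ) with hrdef
  have hd1 : (1:ℝ) ≤ d := by exact_mod_cast hd
  have hsq : (1:ℝ) ≤ Real.sqrt d := by
    rw [show (1:ℝ) = Real.sqrt 1 by simp]
    exact Real.sqrt_le_sqrt hd1
  have hr : 0 < r := by
    have := two_zpow_pos (-k)
    nlinarith
  set B := Metric.closedBall x r with hB
  set Q := dyadicCube d (-k) m' with hQ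
  -- cube inside ball
  have hQB : Q ⊆ B := by
    intro q hq
    rw [hB, Metric.mem_closedBall, dist_eq_norm]
    exact norm_sub_le_of_mem_cube hq hx
  -- measure of ball
  have hBvol : volume B = ENNReal.ofReal ((Real.sqrt d)^d) *
      ENNReal.ofReal (((2:ℝ)^(-k:ℤ))^d) *
      volume (Metric.ball (0 : EuclideanSpace ℝ (Fin d)) 1) := by
    rw [hB, Measure.addHaar_closedBall _ _ hr.le, finrank_euclideanSpace_fin]
    congr 1
    rw [hrdef, mul_pow, ENNReal.ofReal_mul (by positivity)]
  have hQvol : volume Q = ENNReal.ofReal (((2:ℝ)^(-k:ℤ))^d) := by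
    rw [hQ, volume_cube, ← ENNReal.ofReal_pow (two_zpow_pos _).le]
  -- δ * μ B = μ Q / 2
  have hdB : delta d * volume B = volume Q / 2 := by
    rw [hBvol, hQvol, delta]
    set X := ENNReal.ofReal ((Real.sqrt d)^d) with hX
    set c1 := volume (Metric.ball (0 : EuclideanSpace ℝ (Fin d)) 1) with hc1
    set Y := ENNReal.ofReal (((2:ℝ)^(-k:ℤ))^d) with hY
    have hXne : X ≠ 0 := by
      rw [hX]
      simp only [ne_eq, ENNReal.ofReal_eq_zero, not_le]
      positivity
    have hXtop : X ≠ ⊤ := ENNReal.ofReal_ne_top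
    have hc1ne : c1 ≠ 0 := (measure_ball_pos _ _ one_pos).ne'
    have hc1top : c1 ≠ ⊤ := measure_ball_lt_top.ne
    rw [ENNReal.mul_inv (Or.inr hc1top) (Or.inr hc1ne),
      ENNReal.mul_inv (Or.inr hXtop) (Or.inr hXne)]
    calc (2:ℝ≥0∞)⁻¹ * X⁻¹ * c1⁻¹ * (X * Y * c1)
        = Y * 2⁻¹ * (X⁻¹ * X) * (c1⁻¹ * c1) := by ring
      _ = Y * 2⁻¹ := by
          rw [ENNReal.inv_mul_cancel hXne hXtop, ENNReal.inv_mul_cancel hc1ne hc1top]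
          ring
      _ = Y / 2 := by rw [ENNReal.div_eq_inv_mul]; ring
  -- μ (Q \ A) ≥ μ Q / 2
  have hQA : volume (Q ∩ A) < volume Q / 2 := by
    rw [hA, Set.inter_comm, Measure.measure_toMeasurable_inter_of_sFinite (measurableSet_cube _ _) _,
      Set.inter_comm]
    exact hm.2
  have hmeasA : MeasurableSet A := measurableSet_toMeasurable _ _
  have hsplit : volume (Q ∩ A) + volume (Q \ A) = volume Q := by
    rw [add_comm]
    exact measure_diff_add_inter Q hmeasA
  have hQdiff : volume Q / 2 ≤ volume (Q \ A) := by
    by_contra hcon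
    push_neg at hcon
    have := ENNReal.add_lt_add hQA hcon
    rw [hsplit, ENNReal.add_halves] at this
    exact absurd this (lt_irrefl _)
  -- key: μ (A ∩ B) + δ μ B ≤ μ B
  have hkey : volume (A ∩ B) + delta d * volume B ≤ volume B := by
    rw [hdB]
    calc volume (A ∩ B) + volume Q / 2 ≤ volume (A ∩ B) + volume (Q \ A) := by
          gcongr
      _ = volume ((A ∩ B) ∪ (Q \ A)) := by
          rw [measure_union _ ((measurableSet_cube (-k) m').diff hmeasA)]
          exact Set.disjoint_left.2 fun z hz hz' => hz'.2 hz.1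
      _ ≤ volume B := by
          apply measure_mono
          apply Set.union_subset Set.inter_subset_right
          exact fun z hz => hQB hz.1
  have hBtop : volume B ≠ ⊤ := measure_closedBall_lt_top.ne
  have h1 : volume (A ∩ B) ≤ (1 - delta d) * volume B := by
    rw [ENNReal.sub_mul (fun _ _ => hBtop), one_mul]
    refine ENNReal.le_sub_of_add_le_right ?_ hkey
    exact (lt_of_le_of_lt (le_trans (le_add_left le_rfl) hkey) measure_closedBall_lt_top).ne
  exact ENNReal.div_le_of_le_mul h1

end Density
end Aux15
namespace Aux15
open Set Metric Filter

section AE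
variable {d : ℕ} {φ f : EuclideanSpace ℝ (Fin d) → ℂ} {n : ℤ}

lemma ae_bddK (hd : 1 ≤ d) :
    ∀ᵐ x, x ∈ toMeasurable volume (OmegaSet d φ f (n+1)) →
      ∃ b : ℤ, ∀ k : ℤ, x ∈ Vset d φ f n k → k ≤ b := by
  set A := toMeasurable volume (OmegaSet d φ f (n+1)) with hAdef
  have hA : MeasurableSet A := measurableSet_toMeasurable _ _
  have hdens := Besicovitch.ae_tendsto_measure_inter_div
    (volume : Measure (EuclideanSpace ℝ (Fin d))) A
  rw [ae_restrict_iff' hA] at hdens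
  filter_upwards [hdens] with x hx hxA
  by_contra hcon
  push_neg at hcon
  have h1 : (1:ℝ≥0∞) - delta d < 1 :=
    ENNReal.sub_lt_self one_ne_top one_ne_zero (delta_ne_zero hd)
  have hev := (hx hxA).eventually (Ioi_mem_nhds h1)
  obtain ⟨u, hu, hIoc⟩ := mem_nhdsGT_iff_exists_Ioc_subset.1 hev
  have hu0 : (0:ℝ) < u := hu
  obtain ⟨j, hj⟩ := pow_unbounded_of_one_lt (Real.sqrt d / u) (by norm_num : (1:ℝ) < 2)
  obtain ⟨k, hkV, hkj⟩ := hcon (j : ℤ)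
  obtain ⟨m', hm', hxm'⟩ := Set.mem_iUnion₂.1 hkV
  set r := Real.sqrt d * (2:ℝ)^(-k:ℤ) with hrdef
  have hsq0 : (0:ℝ) < Real.sqrt d := by
    have : (1:ℝ) ≤ d := by exact_mod_cast hd
    positivity
  have hr0 : 0 < r := by
    have := two_zpow_pos (-k)
    positivity
  have hru : r ≤ u := by
    have h2 : (2:ℝ)^(-k:ℤ) ≤ (2:ℝ)^(-(j:ℤ)) :=
      (zpow_le_zpow_iff_right₀ (by norm_num : (1:ℝ) < 2)).2 (by omega)
    have h3 : (2:ℝ)^(-(j:ℤ)) = ((2:ℝ)^j)⁻¹ := by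
      rw [zpow_neg, zpow_natCast]
    have h4 : Real.sqrt d / u < 2^j := hj
    have h5 : Real.sqrt d * ((2:ℝ)^j)⁻¹ < u := by
      rw [mul_inv_lt_iff₀ (by positivity)]
      calc Real.sqrt d = (Real.sqrt d / u) * u := by field_simp
        _ < 2^j * u := by
            exact mul_lt_mul_of_pos_right h4 hu0
        _ = u * 2^j := by ring
    calc r ≤ Real.sqrt d * (2:ℝ)^(-(j:ℤ)) := by
          exact mul_le_mul_of_nonneg_left h2 hsq0.le
      _ ≤ u := by rw [h3]; exact h5.le
  have hmem : r ∈ Set.Ioc (0:ℝ) u := ⟨hr0, hru⟩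
  have hgt := hIoc hmem
  have hle := ratio_le (φ := φ) (f := f) (n := n) hd hm' hxm'
  rw [← hAdef] at hle
  exact absurd hle (not_le.2 hgt)

/-- the constant `4·2^{2n}` -/
def CB (n : ℤ) : ℝ≥0∞ := ((2:ℝ≥0∞)^(n+1)) ^ (2:ℕ)

lemma ae_G_le (hd : 1 ≤ d) :
    ∀ᵐ x, (∑' k : ℤ, Set.indicator (Vset d φ f n k)
        (fun x => (‖Lk d φ f k x‖₊ : ℝ≥0∞)^2) x)
      ≤ Set.indicator (Vall d φ f n) (fun _ => CB n) x := by
  filter_upwards [ae_bddK (φ := φ) (f := f) (n := n) hd] with x hbdd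
  by_cases hxV : x ∈ Vall d φ f n
  swap
  · have hz : ∀ k : ℤ, Set.indicator (Vset d φ f n k)
        (fun x => (‖Lk d φ f k x‖₊ : ℝ≥0∞)^2) x = 0 := fun k =>
      Set.indicator_of_notMem (fun hk => hxV (Set.mem_iUnion.2 ⟨k, hk⟩)) _
    simp [hz]
  · rw [Set.indicator_of_mem hxV]
    by_cases hxO : x ∈ OmegaSet d φ f (n+1)
    · have hxA : x ∈ toMeasurable volume (OmegaSet d φ f (n+1)) :=
        subset_toMeasurable _ _ hxO
      obtain ⟨b, hb⟩ := hbdd hxA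
      obtain ⟨k0, hk0⟩ := Set.mem_iUnion.1 hxV
      obtain ⟨kstar, hkstar, hmax⟩ := Int.exists_greatest_of_bdd
        (P := fun k => x ∈ Vset d φ f n k) ⟨b, hb⟩ ⟨k0, hk0⟩
      obtain ⟨ms, hms, hxms⟩ := Set.mem_iUnion₂.1 hkstar
      obtain ⟨z, hzQ, hzO⟩ := exists_not_in_Omega hms
      refine le_trans (ENNReal.tsum_le_tsum fun k => ?_) (tsum_Sk_le hzO)
      by_cases hk : x ∈ Vset d φ f n k
      · rw [Set.indicator_of_mem hk]
        obtain ⟨mk, hmk, hxmk⟩ := Set.mem_iUnion₂.1 hk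
        have hkk : k ≤ kstar := hmax k hk
        have hsub : dyadicCube d (-kstar) ms ⊆ dyadicCube d (-k) mk :=
          cube_subset_cube (by omega) hxms hxmk
        apply point_le_Sk
        calc ‖x - z‖ ≤ Real.sqrt d * (2:ℝ)^(-k:ℤ) :=
              norm_sub_le_of_mem_cube hxmk (hsub hzQ)
          _ ≤ 100 * d * (2:ℝ)^(-k:ℤ) := sqrt_d_mul_le hd _
      · simp [Set.indicator_of_notMem hk]
    · refine le_trans (ENNReal.tsum_le_tsum fun k => ?_) (tsum_Sk_le hxO)
      by_cases hk : x ∈ Vset d φ f n k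
      · rw [Set.indicator_of_mem hk]
        apply point_le_Sk
        have h0 : ‖x - x‖ = 0 := by simp
        rw [h0]
        have := two_zpow_pos (-k)
        have hd1 : (1:ℝ) ≤ d := by exact_mod_cast hd
        positivity
      · simp [Set.indicator_of_notMem hk]

end AE
end Aux15
namespace Aux15
open Set Metric

section Cover
variable {d : ℕ} {φ f : EuclideanSpace ℝ (Fin d) → ℂ} {n : ℤ}

lemma exists_k_lower (hd : 1 ≤ d) (hfin : volume (OmegaSet d φ f n) ≠ ⊤) :
    ∃ k₀ : ℤ, ∀ k : ℤ, ∀ m' : Fin d → ℤ, memQcal d φ f n k m' → k₀ ≤ k := by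
  have h2fin : 2 * volume (OmegaSet d φ f n) ≠ ⊤ :=
    ENNReal.mul_ne_top (by norm_num) hfin
  obtain ⟨N, hN⟩ := ENNReal.exists_nat_gt h2fin
  refine ⟨-(N:ℤ), fun k m' hm => ?_⟩
  by_contra hcon
  push_neg at hcon
  have hkN : (N:ℤ) ≤ -k := by omega
  have hQ2 : volume (dyadicCube d (-k) m') ≤ 2 * volume (OmegaSet d φ f n) := by
    have h1 : volume (dyadicCube d (-k) m') / 2 ≤ volume (OmegaSet d φ f n) :=
      hm.1.trans (measure_mono Set.inter_subset_right)
    calc volume (dyadicCube d (-k) m')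
        = volume (dyadicCube d (-k) m') / 2 + volume (dyadicCube d (-k) m') / 2 :=
          (ENNReal.add_halves _).symm
      _ ≤ volume (OmegaSet d φ f n) + volume (OmegaSet d φ f n) := add_le_add h1 h1
      _ = 2 * volume (OmegaSet d φ f n) := (two_mul _).symm
  have hbig : (N : ℝ≥0∞) ≤ volume (dyadicCube d (-k) m') := by
    rw [volume_cube]
    have h1 : (1:ℝ) ≤ (2:ℝ)^(-k:ℤ) := by
      apply one_le_zpow₀ (by norm_num : (1:ℝ) ≤ 2) (by omega)
    have h2 : ((N:ℝ)) ≤ (2:ℝ)^(-k:ℤ) := by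
      have ha : ((N:ℝ)) ≤ (2:ℝ)^(N:ℕ) := by
        have := Nat.lt_two_pow_self (n := N)
        exact_mod_cast this.le
      have hb : (2:ℝ)^(N:ℕ) = (2:ℝ)^((N:ℕ):ℤ) := by
        rw [zpow_natCast]
      have hc : (2:ℝ)^((N:ℕ):ℤ) ≤ (2:ℝ)^(-k) :=
        (zpow_le_zpow_iff_right₀ (by norm_num : (1:ℝ) < 2)).2 hkN
      calc ((N:ℝ)) ≤ (2:ℝ)^(N:ℕ) := ha
        _ = (2:ℝ)^((N:ℕ):ℤ) := hb
        _ ≤ (2:ℝ)^(-k) := hc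
    calc (N : ℝ≥0∞) = ENNReal.ofReal (N:ℝ) := by
          rw [ENNReal.ofReal_natCast]
      _ ≤ ENNReal.ofReal ((2:ℝ)^(-k:ℤ)) := ENNReal.ofReal_le_ofReal h2
      _ ≤ (ENNReal.ofReal ((2:ℝ)^(-k:ℤ)))^d := by
          apply le_self_pow₀ (ENNReal.one_le_ofReal.2 h1) (by omega)
  have : (N : ℝ≥0∞) ≤ 2 * volume (OmegaSet d φ f n) := hbig.trans hQ2
  exact absurd hN (not_lt.2 this)

lemma exists_maximal_cube (hd : 1 ≤ d) (hfin : volume (OmegaSet d φ f n) ≠ ⊤)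
    {k : ℤ} {m' : Fin d → ℤ} (hm : memQcal d φ f n k m') :
    ∃ k₁ : ℤ, ∃ m₁ : Fin d → ℤ, memQcal d φ f n k₁ m₁ ∧
      dyadicCube d (-k) m' ⊆ dyadicCube d (-k₁) m₁ ∧
      ∀ k₂ : ℤ, ∀ m₂ : Fin d → ℤ, memQcal d φ f n k₂ m₂ →
        dyadicCube d (-k₁) m₁ ⊆ dyadicCube d (-k₂) m₂ →
        dyadicCube d (-k₂) m₂ = dyadicCube d (-k₁) m₁ := by
  obtain ⟨k₀, hk₀⟩ := exists_k_lower (φ := φ) (f := f) (n := n) hd hfin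
  obtain ⟨j, ⟨m₁, hm₁, hsub⟩, hleast⟩ := Int.exists_least_of_bdd
    (P := fun j => ∃ m₁, memQcal d φ f n j m₁ ∧
      dyadicCube d (-k) m' ⊆ dyadicCube d (-j) m₁)
    ⟨k₀, fun z hz => hk₀ z hz.choose hz.choose_spec.1⟩
    ⟨k, m', hm, subset_rfl⟩
  refine ⟨j, m₁, hm₁, hsub, fun k₂ m₂ h₂ hsub₂ => ?_⟩
  have hjk₂ : j ≤ k₂ := hleast k₂ ⟨m₂, h₂, hsub.trans hsub₂⟩
  have hlev : -j ≤ -k₂ := level_le_of_subset hd hsub₂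
  have hk₂j : k₂ = j := by omega
  subst hk₂j
  have hx : corner (-k₂) m₁ ∈ dyadicCube d (-k₂) m₂ := hsub₂ (corner_mem _ _)
  exact Subset.antisymm (cube_subset_cube le_rfl hx (corner_mem _ _)) hsub₂

lemma vol_Vall_le (hd : 1 ≤ d) (hfin : volume (OmegaSet d φ f n) ≠ ⊤) :
    volume (Vall d φ f n) ≤ 2 * volume (OmegaSet d φ f n) := by
  set Mset : Set (ℤ × (Fin d → ℤ)) := {p | memQcal d φ f n p.1 p.2 ∧
     ∀ q : ℤ × (Fin d → ℤ), memQcal d φ f n q.1 q.2 →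
       dyadicCube d (-p.1) p.2 ⊆ dyadicCube d (-q.1) q.2 →
       dyadicCube d (-q.1) q.2 = dyadicCube d (-p.1) p.2} with hMdef
  have hcover : Vall d φ f n ⊆ ⋃ p ∈ Mset, dyadicCube d (-p.1) p.2 := by
    intro x hx
    obtain ⟨k, hk⟩ := Set.mem_iUnion.1 hx
    obtain ⟨m', hm', hxm'⟩ := Set.mem_iUnion₂.1 hk
    obtain ⟨k₁, m₁, hm₁, hsub, hmax⟩ := exists_maximal_cube hd hfin hm'
    refine Set.mem_biUnion (show ((k₁, m₁) : ℤ × (Fin d → ℤ)) ∈ Mset from ?_) (hsub hxm')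
    exact ⟨hm₁, fun q hq hsq => hmax q.1 q.2 hq hsq⟩
  have hdisj : Mset.PairwiseDisjoint (fun p => dyadicCube d (-p.1) p.2) := by
    intro p hp q hq hpq
    refine Set.disjoint_left.2 fun x hxp hxq => hpq ?_
    rcases le_total (-p.1 : ℤ) (-q.1) with h | h
    · have hsub := cube_subset_cube h hxp hxq
      have heq := hp.2 q hq.1 hsub
      obtain ⟨hs, hmm⟩ := cube_injective hd heq
      exact Prod.ext (by omega) hmm.symm
    · have hsub := cube_subset_cube h hxq hxp
      have heq := hq.2 p hp.1 hsub
      obtain ⟨hs, hmm⟩ := cube_injective hd heq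
      exact Prod.ext (by omega) hmm
  have hcnt : Mset.Countable := Set.to_countable _
  set Om := toMeasurable volume (OmegaSet d φ f n) with hOm
  have hOmM : MeasurableSet Om := measurableSet_toMeasurable _ _
  calc volume (Vall d φ f n) ≤ volume (⋃ p ∈ Mset, dyadicCube d (-p.1) p.2) :=
        measure_mono hcover
    _ ≤ ∑' p : Mset, volume (dyadicCube d (-(p:ℤ × (Fin d → ℤ)).1) (p:ℤ × (Fin d → ℤ)).2) :=
        measure_biUnion_le _ hcnt _
    _ ≤ ∑' p : Mset, 2 * volume (dyadicCube d (-(p:ℤ × (Fin d → ℤ)).1)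
          (p:ℤ × (Fin d → ℤ)).2 ∩ Om) := by
        apply ENNReal.tsum_le_tsum
        intro p
        have hp1 := p.2.1.1
        have heq : volume (dyadicCube d (-(p:ℤ × (Fin d → ℤ)).1) (p:ℤ × (Fin d → ℤ)).2 ∩ Om)
            = volume (dyadicCube d (-(p:ℤ × (Fin d → ℤ)).1) (p:ℤ × (Fin d → ℤ)).2
              ∩ OmegaSet d φ f n) := by
          rw [hOm, Set.inter_comm,
            Measure.measure_toMeasurable_inter_of_sFinite (measurableSet_cube _ _) _,
            Set.inter_comm]
        rw [heq]
        calc volume (dyadicCube d (-(p:ℤ × (Fin d → ℤ)).1) (p:ℤ × (Fin d → ℤ)).2)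
            = 2 * (volume (dyadicCube d (-(p:ℤ × (Fin d → ℤ)).1) (p:ℤ × (Fin d → ℤ)).2) / 2) := by
              rw [ENNReal.mul_div_cancel' (by norm_num) (by norm_num)]
          _ ≤ 2 * volume (dyadicCube d (-(p:ℤ × (Fin d → ℤ)).1) (p:ℤ × (Fin d → ℤ)).2
              ∩ OmegaSet d φ f n) := by
              exact mul_le_mul_right hp1 2
    _ = 2 * ∑' p : Mset, volume (dyadicCube d (-(p:ℤ × (Fin d → ℤ)).1)
          (p:ℤ × (Fin d → ℤ)).2 ∩ Om) := ENNReal.tsum_mul_left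
    _ = 2 * volume (⋃ p : Mset, dyadicCube d (-(p:ℤ × (Fin d → ℤ)).1)
          (p:ℤ × (Fin d → ℤ)).2 ∩ Om) := by
        congr 1
        rw [measure_iUnion ?_ (fun p => (measurableSet_cube _ _).inter hOmM)]
        intro p q hne
        have hne' : (p : ℤ × (Fin d → ℤ)) ≠ (q : ℤ × (Fin d → ℤ)) :=
          Subtype.coe_injective.ne hne
        exact (hdisj p.2 q.2 hne').mono Set.inter_subset_left Set.inter_subset_left
    _ ≤ 2 * volume Om := by
        apply mul_le_mul_right
        apply measure_mono
        exact Set.iUnion_subset fun p => Set.inter_subset_right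
    _ = 2 * volume (OmegaSet d φ f n) := by rw [hOm, measure_toMeasurable]

end Cover
end Aux15
namespace Aux15
open Set Metric

section Final
variable {d : ℕ} {φ f : EuclideanSpace ℝ (Fin d) → ℂ} {n : ℤ}

/-- the support set of the atom -/
def Sset (d : ℕ) (φ f : EuclideanSpace ℝ (Fin d) → ℂ) (n k s : ℤ) (m : Fin d → ℤ) :
    Set (EuclideanSpace ℝ (Fin d)) :=
  {x | ∃ m' : Fin d → ℤ, memQcal d φ f n k m' ∧
      dyadicCube d (-k) m' ⊆ dyadicCube d s m ∧ x ∈ dyadicCube d (-k) m'}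

lemma atomA_eq (k s : ℤ) (m : Fin d → ℤ) :
    atomA d φ f n k s m = Set.indicator (Sset d φ f n k s m) (Lk d φ f k) := rfl

lemma Sset_eq_iUnion (k s : ℤ) (m : Fin d → ℤ) :
    Sset d φ f n k s m = ⋃ (m' : Fin d → ℤ)
      (_ : memQcal d φ f n k m' ∧ dyadicCube d (-k) m' ⊆ dyadicCube d s m),
        dyadicCube d (-k) m' := by
  ext x
  simp only [Sset, Set.mem_setOf_eq, Set.mem_iUnion, exists_prop]
  tauto

lemma measurableSet_Sset (k s : ℤ) (m : Fin d → ℤ) :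
    MeasurableSet (Sset d φ f n k s m) := by
  rw [Sset_eq_iUnion]
  exact MeasurableSet.iUnion fun m' => MeasurableSet.iUnion fun _ => measurableSet_cube _ _

lemma Sset_subset_Vset {k s : ℤ} {m : Fin d → ℤ} :
    Sset d φ f n k s m ⊆ Vset d φ f n k := by
  rintro x ⟨m', hm', _, hx⟩
  exact Set.mem_iUnion₂.2 ⟨m', hm', hx⟩

lemma Sset_subset_cube {k s : ℤ} {m : Fin d → ℤ} :
    Sset d φ f n k s m ⊆ dyadicCube d s m := by
  rintro x ⟨m', _, hsub, hx⟩
  exact hsub hx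

lemma whitney_unique (hd : 1 ≤ d) {s s' : ℤ} {m m' : Fin d → ℤ}
    (h : whitney d φ f n s m) (h' : whitney d φ f n s' m')
    {x : EuclideanSpace ℝ (Fin d)} (hx : x ∈ dyadicCube d s m)
    (hx' : x ∈ dyadicCube d s' m') : s = s' ∧ m = m' := by
  have key : ∀ s₁ s₂ : ℤ, ∀ m₁ m₂ : Fin d → ℤ, s₁ ≤ s₂ →
      whitney d φ f n s₁ m₁ → whitney d φ f n s₂ m₂ →
      x ∈ dyadicCube d s₁ m₁ → x ∈ dyadicCube d s₂ m₂ →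
      s₁ = s₂ ∧ m₁ = m₂ := by
    intro s₁ s₂ m₁ m₂ hle h₁ h₂ hx₁ hx₂
    have hsub := cube_subset_cube hle hx₁ hx₂
    by_cases heq : dyadicCube d s₁ m₁ = dyadicCube d s₂ m₂
    · exact cube_injective hd heq
    · exact absurd h₂.1 (h₁.2 s₂ m₂ (ssubset_iff_subset_ne.2 ⟨hsub, heq⟩))
  rcases le_total s s' with hle | hle
  · exact key s s' m m' hle h h' hx hx'
  · obtain ⟨h1, h2⟩ := key s' s m' m hle h' h hx' hx
    exact ⟨h1.symm, h2.symm⟩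

lemma nnnorm_indicator_sq (S : Set (EuclideanSpace ℝ (Fin d)))
    (g : EuclideanSpace ℝ (Fin d) → ℂ) (x : EuclideanSpace ℝ (Fin d)) :
    (‖Set.indicator S g x‖₊ : ℝ≥0∞)^2
      = Set.indicator S (fun y => (‖g y‖₊ : ℝ≥0∞)^2) x := by
  by_cases hx : x ∈ S
  · simp [Set.indicator_of_mem hx]
  · simp [Set.indicator_of_notMem hx]

end Final
end Aux15
/-- The basic `L²` estimate for the Chang–Fefferman atomic decomposition:
`Σ_{W ∈ 𝒲_n} Σ_k ‖a_{k,W,n}‖₂² ≤ 8·2^{2n}·meas(Ω_n)`. -/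
theorem statement15 (d : ℕ) (hd : 1 ≤ d) (p : ℝ) (hp1 : 1 < p) (hp2 : p < 2)
    (φ : SchwartzMap (EuclideanSpace ℝ (Fin d)) ℂ)
    (hrad : ∀ x y : EuclideanSpace ℝ (Fin d), ‖x‖ = ‖y‖ → φ x = φ y)
    (hsupp : Function.support (𝓕 ⇑φ) ⊆
      {ξ : EuclideanSpace ℝ (Fin d) | 1 / 5 < ‖ξ‖ ∧ ‖ξ‖ < 5})
    (f : EuclideanSpace ℝ (Fin d) → ℂ) (hf : Measurable f)
    (hfp : MemLp f (ENNReal.ofReal p)) (n : ℤ) :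
    (∑' (s : ℤ) (m : Fin d → ℤ),
        if whitney d (⇑φ) f n s m then
          ∑' k : ℤ, ∫⁻ x, (‖atomA d (⇑φ) f n k s m x‖₊ : ℝ≥0∞) ^ 2
        else 0) ≤
      8 * (2 : ℝ≥0∞) ^ (2 * n) * volume (OmegaSet d (⇑φ) f n) := by
  classical
  by_cases htop : volume (OmegaSet d (⇑φ) f n) = ⊤
  · rw [htop, ENNReal.mul_top
      (mul_ne_zero (by norm_num) (ENNReal.zpow_pos (by norm_num) (by norm_num) (2*n)).ne')]
    exact le_top
  · have hfin : volume (OmegaSet d (⇑φ) f n) ≠ ⊤ := htop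
    set Fk : ℤ → EuclideanSpace ℝ (Fin d) → ℝ≥0∞ :=
      fun k x => (‖Lk d (⇑φ) f k x‖₊ : ℝ≥0∞)^2 with hFkdef
    have hFk_meas : ∀ k, Measurable (Fk k) := fun k =>
      ((Aux15.measurable_Lk φ.continuous hf k).nnnorm.coe_nnreal_ennreal).pow_const 2
    have hterm_meas : ∀ (k s : ℤ) (m : Fin d → ℤ),
        Measurable (fun x => Set.indicator (Aux15.Sset d (⇑φ) f n k s m) (Fk k) x) :=
      fun k s m => (hFk_meas k).indicator (Aux15.measurableSet_Sset k s m)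
    have hH_meas : ∀ (s : ℤ) (m : Fin d → ℤ), Measurable (fun x =>
        if whitney d (⇑φ) f n s m then
          ∑' k : ℤ, Set.indicator (Aux15.Sset d (⇑φ) f n k s m) (Fk k) x else 0) := by
      intro s m
      by_cases h : whitney d (⇑φ) f n s m
      · simp only [h, if_true]
        exact Measurable.ennreal_tsum fun k => hterm_meas k s m
      · simp only [h, if_false]
        exact measurable_const
    have hstep1 : ∀ (s : ℤ) (m : Fin d → ℤ),
        (if whitney d (⇑φ) f n s m then
          ∑' k : ℤ, ∫⁻ x, (‖atomA d (⇑φ) f n k s m x‖₊ : ℝ≥0∞) ^ 2 else 0)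
        = ∫⁻ x, (if whitney d (⇑φ) f n s m then
            ∑' k : ℤ, Set.indicator (Aux15.Sset d (⇑φ) f n k s m) (Fk k) x else 0) := by
      intro s m
      by_cases h : whitney d (⇑φ) f n s m
      · simp only [h, if_true]
        have hconv : ∀ k : ℤ, (fun x => (‖atomA d (⇑φ) f n k s m x‖₊ : ℝ≥0∞) ^ 2)
            = fun x => Set.indicator (Aux15.Sset d (⇑φ) f n k s m) (Fk k) x := by
          intro k
          funext x
          rw [Aux15.atomA_eq, Aux15.nnnorm_indicator_sq]
        calc (∑' k : ℤ, ∫⁻ x, (‖atomA d (⇑φ) f n k s m x‖₊ : ℝ≥0∞) ^ 2)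
            = ∑' k : ℤ, ∫⁻ x, Set.indicator (Aux15.Sset d (⇑φ) f n k s m) (Fk k) x :=
              tsum_congr fun k => by rw [hconv k]
          _ = ∫⁻ x, ∑' k : ℤ, Set.indicator (Aux15.Sset d (⇑φ) f n k s m) (Fk k) x :=
              (lintegral_tsum fun k => (hterm_meas k s m).aemeasurable).symm
      · simp [h]
    have hpt : ∀ x, (∑' (s : ℤ) (m : Fin d → ℤ), (if whitney d (⇑φ) f n s m then
          ∑' k : ℤ, Set.indicator (Aux15.Sset d (⇑φ) f n k s m) (Fk k) x else 0))
        ≤ ∑' k : ℤ, Set.indicator (Aux15.Vset d (⇑φ) f n k) (Fk k) x := by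
      intro x
      have hite : ∀ (s : ℤ) (m : Fin d → ℤ), (if whitney d (⇑φ) f n s m then
          ∑' k : ℤ, Set.indicator (Aux15.Sset d (⇑φ) f n k s m) (Fk k) x else 0)
          = ∑' k : ℤ, (if whitney d (⇑φ) f n s m then
              Set.indicator (Aux15.Sset d (⇑φ) f n k s m) (Fk k) x else 0) := by
        intro s m
        by_cases h : whitney d (⇑φ) f n s m <;> simp [h]
      simp_rw [hite]
      have hswap1 : (∑' (s : ℤ) (m : Fin d → ℤ) (k : ℤ), (if whitney d (⇑φ) f n s m then
          Set.indicator (Aux15.Sset d (⇑φ) f n k s m) (Fk k) x else 0))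
          = ∑' (s : ℤ) (k : ℤ) (m : Fin d → ℤ), (if whitney d (⇑φ) f n s m then
          Set.indicator (Aux15.Sset d (⇑φ) f n k s m) (Fk k) x else 0) :=
        tsum_congr fun s => ENNReal.tsum_comm
      have hswap2 : (∑' (s : ℤ) (k : ℤ) (m : Fin d → ℤ), (if whitney d (⇑φ) f n s m then
          Set.indicator (Aux15.Sset d (⇑φ) f n k s m) (Fk k) x else 0))
          = ∑' (k : ℤ) (s : ℤ) (m : Fin d → ℤ), (if whitney d (⇑φ) f n s m then
          Set.indicator (Aux15.Sset d (⇑φ) f n k s m) (Fk k) x else 0) :=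
        ENNReal.tsum_comm
      rw [hswap1, hswap2]
      refine ENNReal.tsum_le_tsum fun k => ?_
      have hprod : (∑' (s : ℤ) (m : Fin d → ℤ), (if whitney d (⇑φ) f n s m then
          Set.indicator (Aux15.Sset d (⇑φ) f n k s m) (Fk k) x else 0))
          = ∑' (q : ℤ × (Fin d → ℤ)), (if whitney d (⇑φ) f n q.1 q.2 then
          Set.indicator (Aux15.Sset d (⇑φ) f n k q.1 q.2) (Fk k) x else 0) :=
        (ENNReal.tsum_prod (f := fun s m => (if whitney d (⇑φ) f n s m then
          Set.indicator (Aux15.Sset d (⇑φ) f n k s m) (Fk k) x else 0))).symm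
      rw [hprod]
      by_cases hex : ∃ q : ℤ × (Fin d → ℤ), whitney d (⇑φ) f n q.1 q.2 ∧
          x ∈ Aux15.Sset d (⇑φ) f n k q.1 q.2
      · obtain ⟨q₀, hw₀, hx₀⟩ := hex
        have huniq : ∀ q : ℤ × (Fin d → ℤ), q ≠ q₀ →
            (if whitney d (⇑φ) f n q.1 q.2 then
              Set.indicator (Aux15.Sset d (⇑φ) f n k q.1 q.2) (Fk k) x else 0) = 0 := by
          intro q hne
          by_cases hw : whitney d (⇑φ) f n q.1 q.2
          · rw [if_pos hw]
            by_cases hxS : x ∈ Aux15.Sset d (⇑φ) f n k q.1 q.2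
            · exfalso
              obtain ⟨h1, h2⟩ := Aux15.whitney_unique hd hw hw₀
                (Aux15.Sset_subset_cube hxS) (Aux15.Sset_subset_cube hx₀)
              exact hne (Prod.ext h1 h2)
            · exact Set.indicator_of_notMem hxS _
          · exact if_neg hw
        rw [tsum_eq_single q₀ huniq, if_pos hw₀, Set.indicator_of_mem hx₀,
          Set.indicator_of_mem (Aux15.Sset_subset_Vset hx₀)]
      · push_neg at hex
        have hz : ∀ q : ℤ × (Fin d → ℤ),
            (if whitney d (⇑φ) f n q.1 q.2 then
              Set.indicator (Aux15.Sset d (⇑φ) f n k q.1 q.2) (Fk k) x else 0) = 0 := by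
          intro q
          by_cases hw : whitney d (⇑φ) f n q.1 q.2
          · rw [if_pos hw]
            exact Set.indicator_of_notMem (hex q hw) _
          · exact if_neg hw
        simp only [hz, tsum_zero]
        exact zero_le
    calc (∑' (s : ℤ) (m : Fin d → ℤ), if whitney d (⇑φ) f n s m then
          ∑' k : ℤ, ∫⁻ x, (‖atomA d (⇑φ) f n k s m x‖₊ : ℝ≥0∞) ^ 2 else 0)
        = ∑' (s : ℤ) (m : Fin d → ℤ), ∫⁻ x, (if whitney d (⇑φ) f n s m then
            ∑' k : ℤ, Set.indicator (Aux15.Sset d (⇑φ) f n k s m) (Fk k) x else 0) :=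
          tsum_congr fun s => tsum_congr fun m => hstep1 s m
      _ = ∑' (s : ℤ), ∫⁻ x, ∑' (m : Fin d → ℤ), (if whitney d (⇑φ) f n s m then
            ∑' k : ℤ, Set.indicator (Aux15.Sset d (⇑φ) f n k s m) (Fk k) x else 0) :=
          tsum_congr fun s => (lintegral_tsum fun m => (hH_meas s m).aemeasurable).symm
      _ = ∫⁻ x, ∑' (s : ℤ) (m : Fin d → ℤ), (if whitney d (⇑φ) f n s m then
            ∑' k : ℤ, Set.indicator (Aux15.Sset d (⇑φ) f n k s m) (Fk k) x else 0) :=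
          (lintegral_tsum fun s =>
            (Measurable.ennreal_tsum fun m => hH_meas s m).aemeasurable).symm
      _ ≤ ∫⁻ x, ∑' k : ℤ, Set.indicator (Aux15.Vset d (⇑φ) f n k) (Fk k) x :=
          lintegral_mono hpt
      _ ≤ ∫⁻ x, Set.indicator (Aux15.Vall d (⇑φ) f n) (fun _ => Aux15.CB n) x :=
          lintegral_mono_ae (Aux15.ae_G_le hd)
      _ = Aux15.CB n * volume (Aux15.Vall d (⇑φ) f n) := by
          rw [lintegral_indicator Aux15.measurableSet_Vall, setLIntegral_const]
      _ ≤ Aux15.CB n * (2 * volume (OmegaSet d (⇑φ) f n)) :=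
          mul_le_mul_right (Aux15.vol_Vall_le hd hfin) _
      _ = 8 * (2 : ℝ≥0∞) ^ (2 * n) * volume (OmegaSet d (⇑φ) f n) := by
          rw [← mul_assoc]
          congr 1
          have h4 : Aux15.CB n = (2:ℝ≥0∞)^(2*n) * 4 := by
            rw [Aux15.CB, pow_two,
              ← ENNReal.zpow_add (by norm_num) (by norm_num) (n+1) (n+1),
              show n + 1 + (n + 1) = 2*n + 2 by ring,
              ENNReal.zpow_add (by norm_num) (by norm_num) (2*n) 2]
            congr 1
            rw [show (2:ℤ) = ((2:ℕ):ℤ) by norm_num, zpow_natCast]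
            norm_num
          rw [h4]
          ring

end
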